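/- For the nondimensionalized van der Waals pressure p(v) = γ/(v−1) − 1/v² on v > 1: (i) if γ > 81/256 then p is strictly decreasing and strictly convex on (1, ∞); (ii) if γ < 8/27 then p' vanishes at exactly two points of (1, ∞), so p has exactly one local minimum and one local maximum there. -/

import Mathlib

open Set

private lemma vdw_hasDerivAt (γ : ℝ) {v : ℝ} (hv : 1 < v) :
    HasDerivAt (fun v : ℝ => γ / (v - 1) - 1 / v ^ 2)
      (2 / v ^ 3 - γ / (v - 1) ^ 2) v := by
  have h1 : v - 1 ≠ 0 := by linarith
  have h0 : v ≠ 0 := by linarith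
  have H1 : HasDerivAt (fun v : ℝ => γ / (v - 1))
      ((0 * (v - 1) - γ * 1) / (v - 1) ^ 2) v :=
    (hasDerivAt_const v γ).div ((hasDerivAt_id v).sub_const 1) h1
  have H2 : HasDerivAt (fun v : ℝ => 1 / v ^ 2)
      ((0 * v ^ 2 - 1 * (↑2 * v ^ 1)) / (v ^ 2) ^ 2) v :=
    (hasDerivAt_const v 1).div (hasDerivAt_pow 2 v) (pow_ne_zero 2 h0)
  refine (H1.sub H2).congr_deriv ?_
  field_simp
  ring

private lemma vdw_deriv (γ : ℝ) {v : ℝ} (hv : 1 < v) :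
    deriv (fun v : ℝ => γ / (v - 1) - 1 / v ^ 2) v = 2 / v ^ 3 - γ / (v - 1) ^ 2 :=
  (vdw_hasDerivAt γ hv).deriv

private lemma vdw_deriv_quot (γ : ℝ) {v : ℝ} (hv : 1 < v) :
    deriv (fun v : ℝ => γ / (v - 1) - 1 / v ^ 2) v
      = (2 * (v - 1) ^ 2 - γ * v ^ 3) / (v ^ 3 * (v - 1) ^ 2) := by
  have h1 : v - 1 ≠ 0 := by linarith
  have h0 : v ≠ 0 := by linarith
  rw [vdw_deriv γ hv]
  field_simp

private lemma vdw_cont (γ : ℝ) {s : Set ℝ} (hs : s ⊆ Set.Ioi 1) :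
    ContinuousOn (fun v : ℝ => γ / (v - 1) - 1 / v ^ 2) s := fun v hv =>
  ((vdw_hasDerivAt γ (hs hv)).differentiableAt.continuousAt).continuousWithinAt

/-- the auxiliary function `G v = 2 (v-1)^2 / v^3`; on `(1,∞)`, `p'(v) = 0 ↔ G v = γ`. -/
private noncomputable def Gfun : ℝ → ℝ := fun v => 2 * (v - 1) ^ 2 / v ^ 3

private lemma Gfun_hasDerivAt {v : ℝ} (hv : v ≠ 0) :
    HasDerivAt Gfun (2 * (v - 1) * (3 - v) / v ^ 4) v := by
  have H1 : HasDerivAt (fun v : ℝ => 2 * (v - 1) ^ 2) (2 * ((↑2 : ℕ) * (v - 1) ^ 1 * 1)) v :=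
    (((hasDerivAt_id v).sub_const 1).pow 2).const_mul 2
  have H2 : HasDerivAt (fun v : ℝ => v ^ 3) ((↑3 : ℕ) * v ^ 2) v := hasDerivAt_pow 3 v
  have := H1.div H2 (pow_ne_zero 3 hv)
  refine this.congr_deriv ?_
  field_simp
  ring

private lemma Gfun_contOn {s : Set ℝ} (hs : ∀ v ∈ s, v ≠ 0) : ContinuousOn Gfun s :=
  fun v hv => ((Gfun_hasDerivAt (hs v hv)).differentiableAt.continuousAt).continuousWithinAt

private lemma Gfun_mono : StrictMonoOn Gfun (Set.Icc 1 3) := by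
  apply strictMonoOn_of_deriv_pos (convex_Icc 1 3)
    (Gfun_contOn fun v hv => by have := hv.1; positivity)
  intro v hv
  rw [interior_Icc] at hv
  rw [(Gfun_hasDerivAt (by have := hv.1; positivity : v ≠ 0)).deriv]
  have h4 : (0:ℝ) < v ^ 4 := by have := hv.1; positivity
  apply div_pos _ h4
  have := hv.1; have := hv.2
  nlinarith

private lemma Gfun_anti : StrictAntiOn Gfun (Set.Ici 3) := by
  apply strictAntiOn_of_deriv_neg (convex_Ici 3)
    (Gfun_contOn fun v hv => by have : (3:ℝ) ≤ v := hv; positivity)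
  intro v hv
  rw [interior_Ici] at hv
  have hv3 : (3:ℝ) < v := hv
  rw [(Gfun_hasDerivAt (by positivity : v ≠ 0)).deriv]
  have h4 : (0:ℝ) < v ^ 4 := by positivity
  apply div_neg_of_neg_of_pos _ h4
  nlinarith

private lemma Gfun_lt_iff {γ v : ℝ} (hv : 1 < v) :
    Gfun v < γ ↔ 2 * (v - 1) ^ 2 - γ * v ^ 3 < 0 := by
  have h3 : (0:ℝ) < v ^ 3 := by positivity
  rw [Gfun, div_lt_iff₀ h3]
  constructor <;> intro h <;> nlinarith

private lemma Gfun_gt_iff {γ v : ℝ} (hv : 1 < v) :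
    γ < Gfun v ↔ 0 < 2 * (v - 1) ^ 2 - γ * v ^ 3 := by
  have h3 : (0:ℝ) < v ^ 3 := by positivity
  rw [Gfun, lt_div_iff₀ h3]
  constructor <;> intro h <;> nlinarith

private lemma Gfun_eq_iff {γ v : ℝ} (hv : 1 < v) :
    Gfun v = γ ↔ 2 * (v - 1) ^ 2 - γ * v ^ 3 = 0 := by
  have h3 : (0:ℝ) ≠ v ^ 3 := by positivity
  rw [Gfun, div_eq_iff h3.symm]
  constructor <;> intro h <;> nlinarith

/-- for the nondimensionalized van der Waals pressure
`p(v) = γ/(v-1) - 1/v²` on `(1, ∞)`: (i) if `γ > 81/256` then `p` is strictly decreasing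
and strictly convex on `(1, ∞)`; (ii) if `0 < γ < 8/27` then `p'` vanishes at exactly two
points of `(1, ∞)`, giving exactly one local minimum and one local maximum of `p` there. -/
theorem vanDerWaals_classification (γ : ℝ) :
    (γ > 81 / 256 →
      StrictAntiOn (fun v : ℝ => γ / (v - 1) - 1 / v ^ 2) (Set.Ioi 1) ∧
      StrictConvexOn ℝ (Set.Ioi (1 : ℝ)) (fun v : ℝ => γ / (v - 1) - 1 / v ^ 2)) ∧
    (0 < γ → γ < 8 / 27 →
      ∃ v₁ v₂ : ℝ, 1 < v₁ ∧ v₁ < v₂ ∧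
        {v : ℝ | v ∈ Set.Ioi (1 : ℝ) ∧
            deriv (fun v : ℝ => γ / (v - 1) - 1 / v ^ 2) v = 0} = {v₁, v₂} ∧
        IsLocalMin (fun v : ℝ => γ / (v - 1) - 1 / v ^ 2) v₁ ∧
        IsLocalMax (fun v : ℝ => γ / (v - 1) - 1 / v ^ 2) v₂) := by
  set f : ℝ → ℝ := fun v : ℝ => γ / (v - 1) - 1 / v ^ 2 with hf
  constructor
  · -- part (i)
    intro hγ
    have hanti : StrictAntiOn f (Set.Ioi 1) := by
      apply strictAntiOn_of_deriv_neg (convex_Ioi 1) (vdw_cont γ le_rfl)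
      intro v hv
      rw [interior_Ioi] at hv
      have hv1 : (1:ℝ) < v := hv
      rw [vdw_deriv_quot γ hv1]
      apply div_neg_of_neg_of_pos
      · have h3 : (0:ℝ) < v ^ 3 := by positivity
        nlinarith [mul_nonneg (sq_nonneg (v - 3)) (show (0:ℝ) ≤ 4 * v - 3 by linarith),
          mul_pos (show (0:ℝ) < γ - 8 / 27 by linarith) h3]
      · have h1 : (0:ℝ) < v - 1 := by linarith
        positivity
    refine ⟨hanti, ?_⟩
    have hD : ∀ v ∈ Set.Ioi (1:ℝ), HasDerivAt (deriv f)
        (2 * γ / (v - 1) ^ 3 - 6 / v ^ 4) v := by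
      intro v hv
      have hv1 : (1:ℝ) < v := hv
      have h1 : v - 1 ≠ 0 := by linarith
      have h0 : v ≠ 0 := by linarith
      have B1 : HasDerivAt (fun v : ℝ => 2 / v ^ 3)
          ((0 * v ^ 3 - 2 * ((↑3:ℕ) * v ^ 2)) / (v ^ 3) ^ 2) v :=
        (hasDerivAt_const v 2).div (hasDerivAt_pow 3 v) (pow_ne_zero 3 h0)
      have B2 : HasDerivAt (fun v : ℝ => γ / (v - 1) ^ 2)
          ((0 * (v - 1) ^ 2 - γ * ((↑2:ℕ) * (v - 1) ^ 1 * 1)) / ((v - 1) ^ 2) ^ 2) v :=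
        (hasDerivAt_const v γ).div (((hasDerivAt_id v).sub_const 1).pow 2)
          (pow_ne_zero 2 h1)
      have base : HasDerivAt (fun v : ℝ => 2 / v ^ 3 - γ / (v - 1) ^ 2)
          (2 * γ / (v - 1) ^ 3 - 6 / v ^ 4) v := by
        refine (B1.sub B2).congr_deriv ?_
        field_simp
        ring
      apply base.congr_of_eventuallyEq
      filter_upwards [isOpen_Ioi.mem_nhds hv] with w hw
      exact vdw_deriv γ hw
    have hmono : StrictMonoOn (deriv f) (Set.Ioi 1) := by
      apply strictMonoOn_of_deriv_pos (convex_Ioi 1)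
        (fun v hv => ((hD v hv).differentiableAt.continuousAt).continuousWithinAt)
      intro v hv
      rw [interior_Ioi] at hv
      have hv1 : (1:ℝ) < v := hv
      rw [(hD v hv).deriv]
      have h1 : (0:ℝ) < v - 1 := by linarith
      have heq : 2 * γ / (v - 1) ^ 3 - 6 / v ^ 4
          = (2 * γ * v ^ 4 - 6 * (v - 1) ^ 3) / ((v - 1) ^ 3 * v ^ 4) := by
        field_simp
      rw [heq]
      apply div_pos
      · have hq : (0:ℝ) ≤ 27 * v ^ 2 - 40 * v + 16 := by nlinarith [sq_nonneg (27 * v - 20)]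
        nlinarith [mul_nonneg (sq_nonneg (v - 4)) hq,
          mul_pos (show (0:ℝ) < γ - 81 / 256 by linarith) (show (0:ℝ) < v ^ 4 by positivity)]
      · positivity
    exact StrictMonoOn.strictConvexOn_of_deriv (convex_Ioi 1) (vdw_cont γ le_rfl)
      (by rwa [interior_Ioi])
  · -- part (ii)
    intro hγ0 hγ
    -- first root in (1,3)
    have hG1 : Gfun 1 = 0 := by simp [Gfun]
    have hG3 : Gfun 3 = 8 / 27 := by norm_num [Gfun]
    obtain ⟨v₁, hv₁, hGv₁⟩ : ∃ v₁ ∈ Set.Ioo (1:ℝ) 3, Gfun v₁ = γ := by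
      have := intermediate_value_Ioo (by norm_num : (1:ℝ) ≤ 3)
        (Gfun_contOn fun v hv => by have := hv.1; positivity)
      have hmem : γ ∈ Set.Ioo (Gfun 1) (Gfun 3) := by rw [hG1, hG3]; exact ⟨hγ0, hγ⟩
      obtain ⟨v₁, h1, h2⟩ := this hmem
      exact ⟨v₁, h1, h2⟩
    -- second root in (3, M)
    set M : ℝ := max 4 (3 / γ) with hM
    have hM4 : (4:ℝ) ≤ M := le_max_left _ _
    have hMγ : 3 / γ ≤ M := le_max_right _ _
    have hM3 : (3:ℝ) ≤ M := by linarith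
    have hGM : Gfun M < γ := by
      have hM0 : (0:ℝ) < M := by linarith
      have h3M : 3 ≤ γ * M := by
        rw [div_le_iff₀ hγ0] at hMγ; linarith [hMγ]
      rw [Gfun_lt_iff (by linarith : (1:ℝ) < M)]
      nlinarith [sq_nonneg M, mul_pos hM0 hM0]
    obtain ⟨v₂, hv₂, hGv₂⟩ : ∃ v₂ ∈ Set.Ioo (3:ℝ) M, Gfun v₂ = γ := by
      have := intermediate_value_Ioo' hM3
        (Gfun_contOn fun v hv => by have := hv.1; positivity)
      have hmem : γ ∈ Set.Ioo (Gfun M) (Gfun 3) := by rw [hG3]; exact ⟨hGM, hγ⟩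
      obtain ⟨v₂, h1, h2⟩ := this hmem
      exact ⟨v₂, h1, h2⟩
    have hv₁1 : (1:ℝ) < v₁ := hv₁.1
    have hv₁3 : v₁ < 3 := hv₁.2
    have hv₂3 : (3:ℝ) < v₂ := hv₂.1
    have hv₂1 : (1:ℝ) < v₂ := by linarith
    have hv₁₂ : v₁ < v₂ := by linarith
    -- sign of the derivative
    have hderiv_neg_lo : ∀ v, 1 < v → v < v₁ → deriv f v < 0 := by
      intro v h1 h2
      have hGlt : Gfun v < γ := by
        rw [← hGv₁]
        exact Gfun_mono ⟨h1.le, by linarith⟩ ⟨hv₁1.le, hv₁3.le⟩ h2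
      rw [vdw_deriv_quot γ h1]
      apply div_neg_of_neg_of_pos
      · exact (Gfun_lt_iff h1).mp hGlt
      · have : (0:ℝ) < v - 1 := by linarith
        positivity
    have hderiv_pos_mid : ∀ v, v₁ < v → v < v₂ → deriv f v > 0 := by
      intro v h1 h2
      have hv1 : (1:ℝ) < v := by linarith
      have hGgt : γ < Gfun v := by
        rcases le_or_gt v 3 with h3 | h3
        · rw [← hGv₁]
          exact Gfun_mono ⟨hv₁1.le, hv₁3.le⟩ ⟨hv1.le, h3⟩ h1
        · rw [← hGv₂]
          exact Gfun_anti h3.le (by linarith : (3:ℝ) ≤ v₂) h2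
      rw [vdw_deriv_quot γ hv1]
      apply div_pos
      · exact (Gfun_gt_iff hv1).mp hGgt
      · have : (0:ℝ) < v - 1 := by linarith
        positivity
    have hderiv_neg_hi : ∀ v, v₂ < v → deriv f v < 0 := by
      intro v h1
      have hv1 : (1:ℝ) < v := by linarith
      have hGlt : Gfun v < γ := by
        rw [← hGv₂]
        exact Gfun_anti hv₂3.le (by linarith : (3:ℝ) ≤ v) h1
      rw [vdw_deriv_quot γ hv1]
      apply div_neg_of_neg_of_pos
      · exact (Gfun_lt_iff hv1).mp hGlt
      · have : (0:ℝ) < v - 1 := by linarith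
        positivity
    have hderiv_zero : ∀ v, 1 < v → Gfun v = γ → deriv f v = 0 := by
      intro v h1 hGv
      rw [vdw_deriv_quot γ h1, (Gfun_eq_iff h1).mp hGv, zero_div]
    -- monotonicity pieces
    have hanti1 : StrictAntiOn f (Set.Ioc 1 v₁) := by
      apply strictAntiOn_of_deriv_neg (convex_Ioc 1 v₁)
        (vdw_cont γ (fun v hv => hv.1))
      intro v hv
      rw [interior_Ioc] at hv
      exact hderiv_neg_lo v hv.1 hv.2
    have hmono1 : StrictMonoOn f (Set.Icc v₁ v₂) := by
      apply strictMonoOn_of_deriv_pos (convex_Icc v₁ v₂)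
        (vdw_cont γ (fun v hv => lt_of_lt_of_le hv₁1 hv.1))
      intro v hv
      rw [interior_Icc] at hv
      exact hderiv_pos_mid v hv.1 hv.2
    have hanti2 : StrictAntiOn f (Set.Ici v₂) := by
      apply strictAntiOn_of_deriv_neg (convex_Ici v₂)
        (vdw_cont γ (fun v hv => lt_of_lt_of_le hv₂1 hv))
      intro v hv
      rw [interior_Ici] at hv
      exact hderiv_neg_hi v hv
    refine ⟨v₁, v₂, hv₁1, hv₁₂, ?_, ?_, ?_⟩
    · -- set equality
      ext v
      simp only [Set.mem_setOf_eq, Set.mem_insert_iff, Set.mem_singleton_iff,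
        Set.mem_Ioi]
      constructor
      · rintro ⟨hv1, hd⟩
        have hnum : 2 * (v - 1) ^ 2 - γ * v ^ 3 = 0 := by
          rw [vdw_deriv_quot γ hv1] at hd
          have hden : v ^ 3 * (v - 1) ^ 2 ≠ 0 := by
            have : (0:ℝ) < v - 1 := by linarith
            positivity
          exact (div_eq_zero_iff.mp hd).resolve_right hden
        have hGv : Gfun v = γ := (Gfun_eq_iff hv1).mpr hnum
        rcases le_or_gt v 3 with h3 | h3
        · left
          exact Gfun_mono.injOn ⟨hv1.le, h3⟩ ⟨hv₁1.le, hv₁3.le⟩ (by rw [hGv, hGv₁])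
        · right
          exact Gfun_anti.injOn h3.le hv₂3.le (by rw [hGv, hGv₂])
      · rintro (rfl | rfl)
        · exact ⟨hv₁1, hderiv_zero v hv₁1 hGv₁⟩
        · exact ⟨hv₂1, hderiv_zero v hv₂1 hGv₂⟩
    · -- local min at v₁
      have hnhds : Set.Ioo (1:ℝ) v₂ ∈ nhds v₁ := Ioo_mem_nhds hv₁1 hv₁₂
      filter_upwards [hnhds] with v hv
      rcases lt_trichotomy v v₁ with h | h | h
      · exact (hanti1 ⟨hv.1, h.le⟩ ⟨hv₁1, le_rfl⟩ h).le
      · rw [h]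
      · exact (hmono1 ⟨le_rfl, hv₁₂.le⟩ ⟨h.le, hv.2.le⟩ h).le
    · -- local max at v₂
      have hnhds : Set.Ioo v₁ (v₂ + 1) ∈ nhds v₂ := Ioo_mem_nhds hv₁₂ (by linarith)
      filter_upwards [hnhds] with v hv
      rcases lt_trichotomy v v₂ with h | h | h
      · exact (hmono1 ⟨hv.1.le, h.le⟩ ⟨hv₁₂.le, le_rfl⟩ h).le
      · rw [h]
      · exact (hanti2 (Set.mem_Ici.mpr le_rfl) h.le h).le
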